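/- For ℓ ≥ 1, positive integers i_1,…,i_ℓ summing to n, and Λ ⊆ {1,…,ℓ}, define n^Λ_𝔦 = Σ_{σ ∈ S^Λ_ℓ} n_{σ(𝔦)} where n_𝔦 = (n−1)!/[(∏_j (i_j−1)!)(∏_{j<ℓ} Σ_{m≤j} i_m)] and σ(𝔦) = (i_{σ^{-1}(1)},…,i_{σ^{-1}(ℓ)}). Then n^Λ_𝔦 = n! / [ (∏_{j=1}^{ℓ} (i_j−1)!) · ∏_{j=1}^{ℓ} (i_j + Σ_{m<j, m,j ∈ Λ} i_m) ]. -/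

import Mathlib

open scoped Classical

namespace NLCAux

def g : List ℚ → ℚ
  | [] => 1
  | a :: t => g t * (a + t.sum)⁻¹

@[simp] lemma g_nil : g [] = 1 := rfl
@[simp] lemma g_cons (a : ℚ) (t : List ℚ) : g (a :: t) = g t * (a + t.sum)⁻¹ := rfl

variable {α : Type*} [LinearOrder α]

def adm (Λ : Finset α) (l : List α) : Prop :=
  List.Pairwise (fun a b => a ∈ Λ → b ∈ Λ → b < a) l

noncomputable def ordn (s : Finset α) : Finset (List α) := s.toList.permutations.toFinset

lemma mem_ordn {s : Finset α} {l : List α} : l ∈ ordn s ↔ (l : Multiset α) = s.val := by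
  simp [ordn, List.mem_toFinset, List.mem_permutations, ← Multiset.coe_eq_coe,
    Finset.coe_toList]

lemma mem_of_mem_ordn {s : Finset α} {l : List α} (h : l ∈ ordn s) {a : α} :
    a ∈ l ↔ a ∈ s := by
  rw [mem_ordn] at h
  rw [← Finset.mem_val, ← h, Multiset.mem_coe]

lemma ordn_ne_nil {s : Finset α} {l : List α} (hl : l ∈ ordn s) (hs : s.Nonempty) : l ≠ [] := by
  rintro rfl
  rw [mem_ordn] at hl
  exact hs.ne_empty (Finset.val_eq_zero.mp hl.symm)

noncomputable def Bf (w : α → ℚ) (Λ s : Finset α) (j : α) : ℚ :=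
  if j ∈ Λ then ∑ m ∈ (Λ ∩ s).filter (· < j), w m else 0

noncomputable def xf (w : α → ℚ) (Λ s : Finset α) (j : α) : ℚ := w j + Bf w Λ s j

lemma xf_pos (w : α → ℚ) (hw : ∀ a, 0 < w a) (Λ s : Finset α) (j : α) : 0 < xf w Λ s j := by
  have hB : 0 ≤ Bf w Λ s j := by
    unfold Bf; split
    · exact Finset.sum_nonneg fun m _ => (hw m).le
    · exact le_rfl
  exact add_pos_of_pos_of_nonneg (hw j) hB

/-- The "allowed last element" predicate. -/
def Pl (Λ s : Finset α) (a : α) : Prop := ∀ b ∈ s.erase a, a ∈ Λ → b ∈ Λ → b < a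

lemma sumP (w : α → ℚ) (Λ s : Finset α) :
    ∑ a ∈ s, (if Pl Λ s a then xf w Λ s a else 0) = ∑ a ∈ s, w a := by
  rw [← Finset.sum_filter_add_sum_filter_not s (· ∈ Λ)
    (fun a => if Pl Λ s a then xf w Λ s a else 0),
    ← Finset.sum_filter_add_sum_filter_not s (· ∈ Λ) w]
  congr 1
  · -- elements of Λ
    rcases (s.filter (· ∈ Λ)).eq_empty_or_nonempty with he | hne
    · rw [he]; simp
    · set T := s.filter (· ∈ Λ) with hT
      set M := T.max' hne with hM
      have hMT : M ∈ T := T.max'_mem hne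
      have hMs : M ∈ s := (Finset.mem_filter.mp hMT).1
      have hMΛ : M ∈ Λ := (Finset.mem_filter.mp hMT).2
      have hPa : ∀ a ∈ T, (Pl Λ s a ↔ a = M) := by
        intro a haT
        have haΛ : a ∈ Λ := (Finset.mem_filter.mp haT).2
        constructor
        · intro hP
          by_contra hne'
          have hMe : M ∈ s.erase a := Finset.mem_erase.mpr ⟨fun h => hne' h.symm, hMs⟩
          have := hP M hMe haΛ hMΛ
          exact absurd this (not_lt.mpr (T.le_max' a haT))
        · rintro rfl
          intro b hb _ hbΛ
          have hbT : b ∈ T := Finset.mem_filter.mpr ⟨(Finset.mem_erase.mp hb).2, hbΛ⟩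
          exact lt_of_le_of_ne (T.le_max' b hbT) (Finset.mem_erase.mp hb).1
      calc ∑ a ∈ T, (if Pl Λ s a then xf w Λ s a else 0)
          = ∑ a ∈ T, (if a = M then xf w Λ s a else 0) :=
            Finset.sum_congr rfl fun a ha => if_congr (hPa a ha) rfl rfl
        _ = xf w Λ s M := by rw [Finset.sum_ite_eq' T M]; simp [hMT]
        _ = ∑ a ∈ T, w a := by
            unfold xf Bf
            rw [if_pos hMΛ]
            have hset : (Λ ∩ s).filter (· < M) = T.erase M := by
              ext m
              simp only [Finset.mem_filter, Finset.mem_inter, Finset.mem_erase, hT]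
              constructor
              · rintro ⟨⟨hmΛ, hms⟩, hlt⟩
                exact ⟨ne_of_lt hlt, hms, hmΛ⟩
              · rintro ⟨hne', hms, hmΛ⟩
                refine ⟨⟨hmΛ, hms⟩, lt_of_le_of_ne (T.le_max' m ?_) hne'⟩
                exact Finset.mem_filter.mpr ⟨hms, hmΛ⟩
            rw [hset, Finset.add_sum_erase T w hMT]
  · -- elements not in Λ
    refine Finset.sum_congr rfl fun a ha => ?_
    have haΛ : a ∉ Λ := by simpa using (Finset.mem_filter.mp ha).2
    rw [if_pos, xf, Bf, if_neg haΛ, add_zero]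
    intro b _ haΛ'
    exact absurd haΛ' haΛ

lemma key (w : α → ℚ) (hw : ∀ a, 0 < w a) (Λ : Finset α) (s : Finset α) :
    ∑ l ∈ (ordn s).filter (adm Λ), g (l.map w) = ∏ j ∈ s, (xf w Λ s j)⁻¹ := by
  induction s using Finset.strongInduction with
  | _ s ih =>
  rcases s.eq_empty_or_nonempty with rfl | hs
  · have h0 : ordn (∅ : Finset α) = {([] : List α)} := by simp [ordn]
    rw [h0, Finset.filter_singleton, if_pos (show adm Λ [] from List.Pairwise.nil)]
    simp
  · have hsum_pos : 0 < ∑ j ∈ s, w j := Finset.sum_pos (fun j _ => hw j) hs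
    have decomp : ∑ l ∈ (ordn s).filter (adm Λ), g (l.map w)
        = ∑ a ∈ s, ∑ t ∈ (ordn (s.erase a)).filter (fun t => adm Λ (a :: t)),
            g ((a :: t).map w) := by
      rw [Finset.sum_sigma']
      refine (Finset.sum_bij' (i := fun (p : Σ _ : α, List α) _ => p.1 :: p.2)
        (j := fun l hl => ⟨l.head (ordn_ne_nil (Finset.mem_filter.mp hl).1 hs), l.tail⟩)
        ?_ ?_ ?_ ?_ ?_).symm
      · rintro ⟨a, t⟩ hp
        dsimp only
        rw [Finset.mem_sigma] at hp
        obtain ⟨ha, ht⟩ := hp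
        rw [Finset.mem_filter] at ht ⊢
        refine ⟨?_, ht.2⟩
        rw [mem_ordn, ← Multiset.cons_coe, mem_ordn.mp ht.1, Finset.erase_val,
          Multiset.cons_erase (Finset.mem_val.mpr ha)]
      · intro l hl
        obtain ⟨hlo, hla⟩ := Finset.mem_filter.mp hl
        have hne := ordn_ne_nil hlo hs
        rw [Finset.mem_sigma]
        constructor
        · exact (mem_of_mem_ordn hlo).mp (List.head_mem hne)
        · rw [Finset.mem_filter]
          constructor
          · rw [mem_ordn]
            have h1 : (l.head hne) ::ₘ (l.tail : Multiset α) = s.val := by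
              rw [Multiset.cons_coe]
              rw [show (l.head hne :: l.tail) = l from List.cons_head_tail hne]
              exact mem_ordn.mp hlo
            rw [Finset.erase_val, ← h1, Multiset.erase_cons_head]
          · rw [show (l.head hne :: l.tail) = l from List.cons_head_tail hne]
            exact hla
      · rintro ⟨a, t⟩ hp; simp
      · intro l hl; exact List.cons_head_tail _
      · rintro ⟨a, t⟩ hp; rfl
    rw [decomp]
    have step2 : ∀ a ∈ s,
        ∑ t ∈ (ordn (s.erase a)).filter (fun t => adm Λ (a :: t)), g ((a :: t).map w)
        = (if Pl Λ s a then xf w Λ s a else 0) * ((∑ j ∈ s, w j)⁻¹ * ∏ j ∈ s, (xf w Λ s j)⁻¹) := by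
      intro a ha
      by_cases hP : Pl Λ s a
      · rw [if_pos hP]
        have hfc : (ordn (s.erase a)).filter (fun t => adm Λ (a :: t))
            = (ordn (s.erase a)).filter (adm Λ) := by
          apply Finset.filter_congr
          intro t ht
          unfold adm
          rw [List.pairwise_cons]
          simp only [iff_self_and, and_iff_right_iff_imp]
          intro _
          intro b hb
          exact fun haΛ hbΛ => hP b ((mem_of_mem_ordn ht).mp hb) haΛ hbΛ
        rw [hfc]
        have hterm : ∀ t ∈ (ordn (s.erase a)).filter (adm Λ),
            g ((a :: t).map w) = g (t.map w) * (∑ j ∈ s, w j)⁻¹ := by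
          intro t ht
          obtain ⟨hto, _⟩ := Finset.mem_filter.mp ht
          rw [List.map_cons, g_cons]
          congr 2
          have hsum : (t.map w).sum = ∑ j ∈ s.erase a, w j := by
            rw [← Multiset.sum_coe, ← Multiset.map_coe, mem_ordn.mp hto]
            rfl
          rw [hsum, Finset.add_sum_erase s w ha]
        rw [Finset.sum_congr rfl hterm, ← Finset.sum_mul, ih (s.erase a) (Finset.erase_ssubset ha)]
        have hprod : ∏ j ∈ s.erase a, (xf w Λ (s.erase a) j)⁻¹
            = ∏ j ∈ s.erase a, (xf w Λ s j)⁻¹ := by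
          refine Finset.prod_congr rfl fun j hj => ?_
          unfold xf Bf
          by_cases hjΛ : j ∈ Λ
          · have hset : ((Λ ∩ s.erase a).filter (· < j)) = ((Λ ∩ s).filter (· < j)) := by
              ext m
              simp only [Finset.mem_filter, Finset.mem_inter, Finset.mem_erase]
              constructor
              · rintro ⟨⟨hmΛ, _, hms⟩, hlt⟩
                exact ⟨⟨hmΛ, hms⟩, hlt⟩
              · rintro ⟨⟨hmΛ, hms⟩, hlt⟩
                refine ⟨⟨hmΛ, ?_, hms⟩, hlt⟩
                rintro rfl
                exact absurd (hP j hj hmΛ hjΛ) (not_lt.mpr hlt.le)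
            rw [if_pos hjΛ, if_pos hjΛ, hset]
          · rw [if_neg hjΛ, if_neg hjΛ]
        rw [hprod]
        have hxne : xf w Λ s a ≠ 0 := (xf_pos w hw Λ s a).ne'
        have hrest : ∏ j ∈ s.erase a, (xf w Λ s j)⁻¹
            = xf w Λ s a * ∏ j ∈ s, (xf w Λ s j)⁻¹ := by
          rw [← Finset.mul_prod_erase s (fun j => (xf w Λ s j)⁻¹) ha, ← mul_assoc,
            mul_inv_cancel₀ hxne, one_mul]
        rw [hrest]; ring
      · rw [if_neg hP, zero_mul]
        rw [Finset.filter_eq_empty_iff.mpr, Finset.sum_empty]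
        intro t ht hadm
        apply hP
        unfold adm at hadm
        rw [List.pairwise_cons] at hadm
        intro b hb haΛ hbΛ
        exact hadm.1 b ((mem_of_mem_ordn ht).mpr hb) haΛ hbΛ
    rw [Finset.sum_congr rfl step2, ← Finset.sum_mul, sumP w Λ s, ← mul_assoc,
      mul_inv_cancel₀ hsum_pos.ne', one_mul]


lemma sum_filter_le_castSucc {m : ℕ} (f : Fin (m + 1) → ℚ) (j : Fin m) :
    ∑ k ∈ Finset.univ.filter (· ≤ j.castSucc), f k
      = ∑ k ∈ Finset.univ.filter (· ≤ j), f k.castSucc := by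
  rw [Finset.sum_filter, Finset.sum_filter, Fin.sum_univ_castSucc]
  simp [Fin.castSucc_le_castSucc_iff, (Fin.castSucc_lt_last j).not_ge]

lemma g_ofFn_reverse : ∀ {m : ℕ} (f : Fin m → ℚ),
    g (List.ofFn f).reverse = ∏ j : Fin m, (∑ k ∈ Finset.univ.filter (· ≤ j), f k)⁻¹
  | 0, f => by simp
  | (m + 1), f => by
    rw [List.ofFn_succ', List.concat_eq_append, List.reverse_append,
      List.reverse_singleton, List.singleton_append, g_cons,
      g_ofFn_reverse (fun i => f i.castSucc), Fin.prod_univ_castSucc]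
    congr 1
    · exact Finset.prod_congr rfl fun j _ => by rw [sum_filter_le_castSucc]
    · congr 1
      rw [List.sum_reverse, List.sum_ofFn]
      have h : Finset.univ.filter (· ≤ Fin.last m) = (Finset.univ : Finset (Fin (m+1))) := by
        simp [Fin.le_last]
      rw [h, Fin.sum_univ_castSucc, add_comm]

lemma adm_ofFn_reverse_iff {m : ℕ} (Λ : Finset (Fin m)) (σ : Equiv.Perm (Fin m)) :
    adm Λ ((List.ofFn (fun j => σ.symm j)).reverse) ↔
      ∀ j j', j ∈ Λ → j' ∈ Λ → j < j' → σ j < σ j' := by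
  unfold adm
  rw [List.pairwise_reverse, List.pairwise_ofFn]
  constructor
  · intro h j j' hj hj' hlt
    rcases lt_trichotomy (σ j) (σ j') with h1 | h1 | h1
    · exact h1
    · exact absurd (σ.injective h1) (ne_of_lt hlt)
    · have h2 := h h1 (by simpa using hj) (by simpa using hj')
      rw [Equiv.symm_apply_apply, Equiv.symm_apply_apply] at h2
      exact absurd hlt (not_lt.mpr h2.le)
  · intro h j j' hlt hj' hj
    rcases lt_trichotomy (σ.symm j) (σ.symm j') with h1 | h1 | h1
    · exact h1
    · exact absurd (σ.symm.injective h1) (ne_of_lt hlt)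
    · have h2 := h _ _ hj' hj h1
      rw [Equiv.apply_symm_apply, Equiv.apply_symm_apply] at h2
      exact absurd hlt (not_lt.mpr h2.le)

lemma perm_sum_eq (m : ℕ) (Λ : Finset (Fin m)) (F : List (Fin m) → ℚ) :
    ∑ σ ∈ Finset.univ.filter (fun σ : Equiv.Perm (Fin m) =>
        ∀ j j', j ∈ Λ → j' ∈ Λ → j < j' → σ j < σ j'),
      F ((List.ofFn (fun j => σ.symm j)).reverse)
    = ∑ l ∈ (ordn Finset.univ).filter (adm Λ), F l := by
  apply Finset.sum_bij (i := fun σ _ => (List.ofFn (fun j => σ.symm j)).reverse)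
  · intro σ hσ
    rw [Finset.mem_filter] at hσ ⊢
    refine ⟨?_, (adm_ofFn_reverse_iff Λ σ).mpr hσ.2⟩
    rw [mem_ordn, Multiset.coe_reverse, ← Finset.coe_toList, Multiset.coe_eq_coe,
      List.perm_ext_iff_of_nodup (List.nodup_ofFn.mpr σ.symm.injective)
        (Finset.nodup_toList _)]
    intro a
    simp only [List.mem_ofFn, Set.mem_range, Finset.mem_toList, Finset.mem_univ, iff_true]
    exact ⟨σ a, by simp⟩
  · intro σ₁ h₁ σ₂ h₂ heq
    have h3 := List.ofFn_injective (List.reverse_injective heq)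
    have h4 : σ₁.symm = σ₂.symm := Equiv.coe_fn_injective h3
    rw [← σ₁.symm_symm, h4, σ₂.symm_symm]
  · intro l hl
    obtain ⟨hlo, hla⟩ := Finset.mem_filter.mp hl
    have hnd : l.Nodup := by
      have := mem_ordn.mp hlo
      have h5 : (l : Multiset (Fin m)).Nodup := by rw [this]; exact Finset.univ.nodup
      exact Multiset.coe_nodup.mp h5
    have hlen : l.length = m := by
      have h6 := congrArg Multiset.card (mem_ordn.mp hlo)
      simpa using h6
    have h2 : m = l.reverse.length := by rw [List.length_reverse, hlen]
    have hndr : l.reverse.Nodup := List.nodup_reverse.mpr hnd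
    set fv : Fin m → Fin m := fun j => l.reverse.get (Fin.cast h2 j) with hfv
    have hinj : Function.Injective fv :=
      (List.nodup_iff_injective_get.mp hndr).comp (Fin.cast_injective h2)
    have hbij : Function.Bijective fv := Finite.injective_iff_bijective.mp hinj
    refine ⟨(Equiv.ofBijective fv hbij).symm, ?_, ?_⟩
    · have hofn : List.ofFn fv = l.reverse := by
        apply List.ext_get
        · simp [← h2]
        · intro n' h1' h2'
          rw [List.get_ofFn]
          exact congrArg l.reverse.get (Fin.ext rfl)
      have hlist : (List.ofFn (fun j => ((Equiv.ofBijective fv hbij).symm).symm j)).reverse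
          = l := by
        have heq2 : (fun j => ((Equiv.ofBijective fv hbij).symm).symm j) = fv := by
          ext j; simp [Equiv.ofBijective_apply]
        rw [heq2, hofn, List.reverse_reverse]
      refine Finset.mem_filter.mpr ⟨Finset.mem_univ _, ?_⟩
      exact (adm_ofFn_reverse_iff Λ _).mp (by rw [hlist]; exact hla)
    · have hofn : List.ofFn fv = l.reverse := by
        apply List.ext_get
        · simp [← h2]
        · intro n' h1' h2'
          rw [List.get_ofFn]
          exact congrArg l.reverse.get (Fin.ext rfl)
      have heq2 : (fun j => ((Equiv.ofBijective fv hbij).symm).symm j) = fv := by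
        ext j; simp [Equiv.ofBijective_apply]
      rw [heq2, hofn, List.reverse_reverse]
  · intro σ hσ; rfl

end NLCAux

open NLCAux



/-- The closed-form coefficient
`n_𝔦 = (n-1)! / ((∏ⱼ (iⱼ-1)!) · ∏_{j<ℓ} (Σ_{m≤j} i_m))`, where `n = Σ iⱼ`. -/
noncomputable def nCoeffClosed {ℓ : ℕ} (i : Fin ℓ → ℕ) : ℚ :=
  (Nat.factorial (∑ j, i j - 1) : ℚ) /
    ((∏ j, (Nat.factorial (i j - 1) : ℚ)) *
      ∏ j ∈ Finset.univ.filter (fun j : Fin ℓ => (j : ℕ) + 1 < ℓ),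
        (∑ m ∈ Finset.univ.filter (fun m : Fin ℓ => m ≤ j), (i m : ℚ)))

/-- `n^Λ_𝔦 = Σ_{σ ∈ S^Λ_ℓ} n_{σ(𝔦)}` has the closed form
`n! / ((∏ⱼ (iⱼ-1)!) · ∏ⱼ (iⱼ + Σ_{m<j, m,j∈Λ} i_m))`. -/
theorem nLambdaCoeff_closed_form (ℓ : ℕ) (hℓ : 1 ≤ ℓ) (Λ : Finset (Fin ℓ))
    (i : Fin ℓ → ℕ) (hi : ∀ j, 0 < i j) (n : ℕ) (hn : ∑ j, i j = n) :
    ∑ σ ∈ Finset.univ.filter (fun σ : Equiv.Perm (Fin ℓ) =>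
        ∀ j j', j ∈ Λ → j' ∈ Λ → j < j' → σ j < σ j'),
      nCoeffClosed (fun j => i (σ.symm j)) =
    (n.factorial : ℚ) /
      ((∏ j, (Nat.factorial (i j - 1) : ℚ)) *
        ∏ j, ((i j : ℚ) + if j ∈ Λ then ∑ m ∈ Λ.filter (· < j), (i m : ℚ) else 0)) := by
  obtain ⟨L, rfl⟩ : ∃ L, ℓ = L + 1 := ⟨ℓ - 1, by omega⟩
  have hn1 : 0 < n := by
    have h0 : 0 < ∑ j, i j := Finset.sum_pos (fun j _ => hi j) Finset.univ_nonempty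
    omega
  have hw : ∀ a : Fin (L + 1), (0 : ℚ) < (i a : ℚ) := fun a => by exact_mod_cast hi a
  have hF : (0 : ℚ) < ∏ j, ((i j - 1).factorial : ℚ) :=
    Finset.prod_pos fun j _ => by exact_mod_cast (i j - 1).factorial_pos
  -- rewrite each summand
  have hterm : ∀ σ : Equiv.Perm (Fin (L + 1)),
      nCoeffClosed (fun j => i (σ.symm j)) =
        ((n.factorial : ℚ) / ∏ j, ((i j - 1).factorial : ℚ)) *
          g (((List.ofFn (fun j => σ.symm j)).reverse).map (fun j => (i j : ℚ))) := by
    intro σ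
    have hsum : ∑ j, i (σ.symm j) = n := by rw [Equiv.sum_comp σ.symm i]; exact hn
    have hprodfact : (∏ j, ((i (σ.symm j) - 1).factorial : ℚ))
        = ∏ j, ((i j - 1).factorial : ℚ) :=
      Equiv.prod_comp σ.symm (fun j => ((i j - 1).factorial : ℚ))
    have hS : ∀ j : Fin (L + 1),
        (0 : ℚ) < ∑ m ∈ Finset.univ.filter (fun m => m ≤ j), (i (σ.symm m) : ℚ) := by
      intro j
      refine Finset.sum_pos' (fun m _ => by positivity) ⟨j, by simp, hw _⟩
    have hfilter_eq : Finset.univ.filter (fun j : Fin (L + 1) => (j : ℕ) + 1 < L + 1)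
        = Finset.univ.erase (Fin.last L) := by
      ext j
      simp only [Finset.mem_filter, Finset.mem_univ, true_and, Finset.mem_erase, and_true]
      rw [Ne, Fin.ext_iff, Fin.val_last]
      have := j.isLt
      omega
    have hSlast : (∑ m ∈ Finset.univ.filter (fun m => m ≤ Fin.last L), (i (σ.symm m) : ℚ))
        = (n : ℚ) := by
      have huniv : Finset.univ.filter (fun m => m ≤ Fin.last L)
          = (Finset.univ : Finset (Fin (L + 1))) := by simp [Fin.le_last]
      rw [huniv, ← Nat.cast_sum, hsum]
    rw [List.map_reverse, List.map_ofFn, g_ofFn_reverse]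
    unfold nCoeffClosed
    rw [hsum, hprodfact, hfilter_eq]
    simp only [Function.comp]
    have hProdErase : (0 : ℚ)
        < ∏ j ∈ Finset.univ.erase (Fin.last L),
            ∑ m ∈ Finset.univ.filter (fun m => m ≤ j), (i (σ.symm m) : ℚ) :=
      Finset.prod_pos fun j _ => hS j
    rw [Finset.prod_inv_distrib,
      ← Finset.mul_prod_erase Finset.univ
        (fun j => ∑ m ∈ Finset.univ.filter (fun m => m ≤ j), (i (σ.symm m) : ℚ))
        (Finset.mem_univ (Fin.last L)), hSlast]
    have hnfact : (n.factorial : ℚ) = (n : ℚ) * ((n - 1).factorial : ℚ) := by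
      rw [← Nat.mul_factorial_pred hn1.ne']; push_cast; ring
    rw [hnfact]
    have h1 : ((n : ℚ)) ≠ 0 := by positivity
    have h2 := hF.ne'
    have h3 := hProdErase.ne'
    field_simp
  rw [Finset.sum_congr rfl fun σ _ => hterm σ, ← Finset.mul_sum]
  have hbridge := perm_sum_eq (L + 1) Λ (fun l => g (l.map (fun j => (i j : ℚ))))
  rw [hbridge, key (fun j => (i j : ℚ)) hw Λ Finset.univ]
  unfold xf Bf
  simp only [Finset.inter_univ]
  rw [Finset.prod_inv_distrib, div_eq_mul_inv, div_eq_mul_inv, mul_assoc, ← mul_inv]
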